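/- Let G be a group with a finite generating set S that is closed under taking inverses, equipped with the word-length metric d(g,h) = (length of the shortest word in S representing g·h⁻¹). Then G satisfies condition (C) (equivalently, has connected Higson corona) if and only if G has at most one end, i.e., the Cayley graph of G with respect to S (the simple graph on vertex set G with g adjacent to gs for each g ∈ G and s ∈ S with s ≠ 1) has at most one end. -/

import Mathlib

open Bornology

def Bornologous {X Y : Type*} [PseudoMetricSpace X] [PseudoMetricSpace Y] (f : X → Y) : Prop :=
  ∀ R : ℝ, 0 < R → ∃ S : ℝ, 0 < S ∧ ∀ x x' : X, dist x x' ≤ R → dist (f x) (f x') ≤ S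

def ProperMap {X Y : Type*} [PseudoMetricSpace X] [PseudoMetricSpace Y] (f : X → Y) : Prop :=
  ∀ B : Set Y, IsBounded B → IsBounded (f ⁻¹' B)

def IsCoarse {X Y : Type*} [PseudoMetricSpace X] [PseudoMetricSpace Y] (f : X → Y) : Prop :=
  Bornologous f ∧ ProperMap f

def Close {X Y : Type*} [PseudoMetricSpace Y] (f g : X → Y) : Prop :=
  ∃ R : ℝ, 0 < R ∧ ∀ x : X, dist (f x) (g x) ≤ R

def coprodDist {X Y : Type*} [MetricSpace X] [MetricSpace Y] (x₀ : X) (y₀ : Y) :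
    X ⊕ Y → X ⊕ Y → ℝ
  | Sum.inl a, Sum.inl b => dist a b
  | Sum.inl a, Sum.inr b => dist a x₀ + 1 + dist y₀ b
  | Sum.inr a, Sum.inl b => dist b x₀ + 1 + dist y₀ a
  | Sum.inr a, Sum.inr b => dist a b

noncomputable def coprodMetric {X Y : Type*} [MetricSpace X] [MetricSpace Y]
    (x₀ : X) (y₀ : Y) : MetricSpace (X ⊕ Y) where
  dist := coprodDist x₀ y₀
  dist_self := by rintro (a | a) <;> simp [coprodDist]
  dist_comm := fun p q => by
    match p, q with
    | Sum.inl a, Sum.inl b => exact dist_comm a b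
    | Sum.inl a, Sum.inr b => rfl
    | Sum.inr a, Sum.inl b => rfl
    | Sum.inr a, Sum.inr b => exact dist_comm a b
  dist_triangle := fun p q r => by
    match p, q, r with
    | Sum.inl a, Sum.inl b, Sum.inl c => exact dist_triangle a b c
    | Sum.inl a, Sum.inl b, Sum.inr c =>
      show dist a x₀ + 1 + dist y₀ c ≤ dist a b + (dist b x₀ + 1 + dist y₀ c)
      have := dist_triangle a b x₀; linarith
    | Sum.inl a, Sum.inr b, Sum.inl c =>
      show dist a c ≤ (dist a x₀ + 1 + dist y₀ b) + (dist c x₀ + 1 + dist y₀ b)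
      have h1 := dist_triangle a x₀ c
      have h2 : dist x₀ c = dist c x₀ := dist_comm _ _
      have h3 := dist_nonneg (x := y₀) (y := b)
      linarith
    | Sum.inl a, Sum.inr b, Sum.inr c =>
      show dist a x₀ + 1 + dist y₀ c ≤ (dist a x₀ + 1 + dist y₀ b) + dist b c
      have := dist_triangle y₀ b c; linarith
    | Sum.inr a, Sum.inl b, Sum.inl c =>
      show dist c x₀ + 1 + dist y₀ a ≤ (dist b x₀ + 1 + dist y₀ a) + dist b c
      have h1 := dist_triangle c b x₀
      have h2 : dist c b = dist b c := dist_comm _ _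
      linarith
    | Sum.inr a, Sum.inl b, Sum.inr c =>
      show dist a c ≤ (dist b x₀ + 1 + dist y₀ a) + (dist b x₀ + 1 + dist y₀ c)
      have h1 := dist_triangle a y₀ c
      have h2 : dist a y₀ = dist y₀ a := dist_comm _ _
      have h3 := dist_nonneg (x := b) (y := x₀)
      linarith
    | Sum.inr a, Sum.inr b, Sum.inl c =>
      show dist c x₀ + 1 + dist y₀ a ≤ dist a b + (dist c x₀ + 1 + dist y₀ b)
      have h1 := dist_triangle y₀ b a
      have h2 : dist b a = dist a b := dist_comm _ _
      linarith
    | Sum.inr a, Sum.inr b, Sum.inr c => exact dist_triangle a b c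
  eq_of_dist_eq_zero := fun {p q} h => by
    match p, q, h with
    | Sum.inl a, Sum.inl b, h => exact congrArg Sum.inl (eq_of_dist_eq_zero h)
    | Sum.inl a, Sum.inr b, h =>
      exfalso
      have h1 := dist_nonneg (x := a) (y := x₀)
      have h2 := dist_nonneg (x := y₀) (y := b)
      have h' : dist a x₀ + 1 + dist y₀ b = 0 := h
      linarith
    | Sum.inr a, Sum.inl b, h =>
      exfalso
      have h1 := dist_nonneg (x := b) (y := x₀)
      have h2 := dist_nonneg (x := y₀) (y := a)
      have h' : dist b x₀ + 1 + dist y₀ a = 0 := h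
      linarith
    | Sum.inr a, Sum.inr b, h => exact congrArg Sum.inr (eq_of_dist_eq_zero h)

/-- Condition (C): every coarse map into a coarse coproduct factors, up to closeness,
through one of the coproduct injections. -/
def CondC (X : Type u) [MetricSpace X] : Prop :=
  ∀ (Y Z : Type u) [MetricSpace Y] [MetricSpace Z] (y₀ : Y) (z₀ : Z) (f : X → Y ⊕ Z),
    letI := coprodMetric y₀ z₀
    IsCoarse f →
      (∃ g : X → Y, IsCoarse g ∧ Close (Sum.inl ∘ g) f) ∨
      (∃ h : X → Z, IsCoarse h ∧ Close (Sum.inr ∘ h) f)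

/-- The word length of `g` with respect to a generating set `S`: the length of a shortest
word in elements of `S` whose product is `g`. -/
noncomputable def wordLength {G : Type*} [Group G] (S : Set G) (g : G) : ℕ :=
  sInf {n : ℕ | ∃ w : List G, w.length = n ∧ (∀ s ∈ w, s ∈ S) ∧ w.prod = g}


section WordLength

variable {G : Type*} [Group G] {S : Finset G}

theorem exists_word (hinv : ∀ s ∈ S, s⁻¹ ∈ S) (hgen : Subgroup.closure (S : Set G) = ⊤)
    (g : G) : ∃ w : List G, (∀ s ∈ w, s ∈ (S : Set G)) ∧ w.prod = g := by
  have hg : g ∈ Subgroup.closure (S : Set G) := hgen ▸ Subgroup.mem_top g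
  induction hg using Subgroup.closure_induction with
  | mem s hs => exact ⟨[s], by simpa using hs, by simp⟩
  | one => exact ⟨[], by simp, by simp⟩
  | mul a b _ _ ha hb =>
    obtain ⟨w1, h1, h1'⟩ := ha
    obtain ⟨w2, h2, h2'⟩ := hb
    refine ⟨w1 ++ w2, ?_, by simp [h1', h2']⟩
    intro s hs
    rcases List.mem_append.mp hs with h | h
    exacts [h1 s h, h2 s h]
  | inv a _ ha =>
    obtain ⟨w, h1, h2⟩ := ha
    refine ⟨(w.reverse.map (·⁻¹)), ?_, ?_⟩
    · intro s hs
      simp only [List.mem_map, List.mem_reverse] at hs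
      obtain ⟨t, ht, rfl⟩ := hs
      exact hinv t (h1 t ht)
    · rw [← h2, List.prod_inv_reverse]
      simp [List.map_reverse]

theorem wordLength_set_nonempty (hinv : ∀ s ∈ S, s⁻¹ ∈ S)
    (hgen : Subgroup.closure (S : Set G) = ⊤) (g : G) :
    {n : ℕ | ∃ w : List G, w.length = n ∧ (∀ s ∈ w, s ∈ (S : Set G)) ∧ w.prod = g}.Nonempty := by
  obtain ⟨w, h1, h2⟩ := exists_word hinv hgen g
  exact ⟨w.length, w, rfl, h1, h2⟩

theorem wordLength_le {g : G} {w : List G} (h1 : ∀ s ∈ w, s ∈ (S : Set G)) (h2 : w.prod = g) :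
    wordLength (S : Set G) g ≤ w.length :=
  Nat.sInf_le ⟨w, rfl, h1, h2⟩

theorem wordLength_spec (hinv : ∀ s ∈ S, s⁻¹ ∈ S) (hgen : Subgroup.closure (S : Set G) = ⊤)
    (g : G) : ∃ w : List G, w.length = wordLength (S : Set G) g ∧
      (∀ s ∈ w, s ∈ (S : Set G)) ∧ w.prod = g :=
  Nat.sInf_mem (wordLength_set_nonempty hinv hgen g)

theorem wordLength_one : wordLength (S : Set G) (1 : G) = 0 :=
  Nat.le_zero.mp (wordLength_le (w := []) (by simp) (by simp))

theorem eq_one_of_wordLength_eq_zero (hinv : ∀ s ∈ S, s⁻¹ ∈ S)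
    (hgen : Subgroup.closure (S : Set G) = ⊤) {g : G}
    (h : wordLength (S : Set G) g = 0) : g = 1 := by
  obtain ⟨w, hl, _, hp⟩ := wordLength_spec hinv hgen g
  rw [h, List.length_eq_zero_iff] at hl
  rw [← hp, hl, List.prod_nil]

theorem wordLength_mul_le (hinv : ∀ s ∈ S, s⁻¹ ∈ S) (hgen : Subgroup.closure (S : Set G) = ⊤)
    (g h : G) :
    wordLength (S : Set G) (g * h) ≤ wordLength (S : Set G) g + wordLength (S : Set G) h := by
  obtain ⟨w1, hl1, hm1, hp1⟩ := wordLength_spec hinv hgen g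
  obtain ⟨w2, hl2, hm2, hp2⟩ := wordLength_spec hinv hgen h
  have := wordLength_le (g := g * h) (w := w1 ++ w2)
    (fun s hs => by rcases List.mem_append.mp hs with h | h; exacts [hm1 s h, hm2 s h])
    (by simp [hp1, hp2])
  simpa [hl1, hl2] using this

theorem wordLength_inv_le (hinv : ∀ s ∈ S, s⁻¹ ∈ S) (hgen : Subgroup.closure (S : Set G) = ⊤)
    (g : G) : wordLength (S : Set G) g⁻¹ ≤ wordLength (S : Set G) g := by
  obtain ⟨w, hl, hm, hp⟩ := wordLength_spec hinv hgen g
  have := wordLength_le (g := g⁻¹) (w := w.reverse.map (·⁻¹))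
    (fun s hs => by
      simp only [List.mem_map, List.mem_reverse] at hs
      obtain ⟨t, ht, rfl⟩ := hs
      exact hinv t (hm t ht))
    (by rw [← hp, List.prod_inv_reverse]; simp [List.map_reverse])
  simpa [hl] using this

theorem wordLength_inv (hinv : ∀ s ∈ S, s⁻¹ ∈ S) (hgen : Subgroup.closure (S : Set G) = ⊤)
    (g : G) : wordLength (S : Set G) g⁻¹ = wordLength (S : Set G) g := by
  refine le_antisymm (wordLength_inv_le hinv hgen g) ?_
  simpa using wordLength_inv_le hinv hgen g⁻¹

/-- The ball of radius `n` for the word length is finite. -/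
theorem wordLength_ball_finite (hinv : ∀ s ∈ S, s⁻¹ ∈ S)
    (hgen : Subgroup.closure (S : Set G) = ⊤) (n : ℕ) :
    {g : G | wordLength (S : Set G) g ≤ n}.Finite := by
  induction n with
  | zero =>
    refine Set.Finite.subset (Set.finite_singleton 1) ?_
    intro g hg
    simp only [Set.mem_setOf_eq, Nat.le_zero] at hg
    simp [eq_one_of_wordLength_eq_zero hinv hgen hg]
  | succ n ih =>
    refine Set.Finite.subset (Set.Finite.union ih
      (Set.Finite.biUnion S.finite_toSet
        (fun s _ => ih.image (fun g => s * g)))) ?_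
    intro g hg
    simp only [Set.mem_setOf_eq] at hg
    obtain ⟨w, hl, hm, hp⟩ := wordLength_spec hinv hgen g
    match w, hl with
    | [], _ =>
      left
      simp only [List.prod_nil] at hp
      simp [Set.mem_setOf_eq, ← hp, wordLength_one]
    | s :: t, hl =>
      right
      have hst : wordLength (S : Set G) t.prod ≤ n := by
        have h1 : wordLength (S : Set G) t.prod ≤ t.length :=
          wordLength_le (fun x hx => hm x (List.mem_cons_of_mem _ hx)) rfl
      -- t.length = wordLength g - 1 ≤ n
        have h2 : t.length + 1 ≤ n + 1 := by
          rw [← List.length_cons (a := s) (as := t), hl] ; exact hg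
        omega
      refine Set.mem_biUnion (hm s (List.mem_cons_self (a := s) (l := t))) ?_
      exact ⟨t.prod, hst, by rw [← hp, List.prod_cons]⟩

end WordLength

section Cayley

open SimpleGraph

variable {G : Type*} [Group G] (S : Finset G)

/-- The Cayley graph from the statement. -/
abbrev cayleyGraph : SimpleGraph G :=
  SimpleGraph.fromRel fun g h : G => ∃ s ∈ S, s ≠ 1 ∧ h = g * s

variable {S}

theorem cayley_adj (hinv : ∀ s ∈ S, s⁻¹ ∈ S) {g h : G} :
    (cayleyGraph S).Adj g h ↔ g ≠ h ∧ ∃ s ∈ S, h = g * s := by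
  rw [SimpleGraph.fromRel_adj]
  constructor
  · rintro ⟨hne, ⟨s, hs, -, rfl⟩ | ⟨s, hs, -, rfl⟩⟩
    · exact ⟨hne, s, hs, rfl⟩
    · exact ⟨hne, s⁻¹, hinv s hs, by group⟩
  · rintro ⟨hne, s, hs, rfl⟩
    have hs1 : s ≠ 1 := by rintro rfl; simp at hne
    exact ⟨hne, Or.inl ⟨s, hs, hs1, rfl⟩⟩

theorem walk_of_word : ∀ (w : List G), (∀ s ∈ w, s ∈ S) → ∀ a b : G, b = a * w.prod →
    ∃ p : (cayleyGraph S).Walk a b, p.length ≤ w.length := by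
  intro w
  induction w with
  | nil =>
    intro _ a b hb
    rw [List.prod_nil, mul_one] at hb
    subst hb
    exact ⟨SimpleGraph.Walk.nil, by simp⟩
  | cons s t ih =>
    intro hmem a b hb
    rw [List.prod_cons, ← mul_assoc] at hb
    by_cases hs1 : s = 1
    · subst hs1
      rw [mul_one] at hb
      obtain ⟨p, hp⟩ := ih (fun x hx => hmem x (List.mem_cons_of_mem _ hx)) a b hb
      exact ⟨p, hp.trans (by simp)⟩
    · have hne : a ≠ a * s := fun h => hs1 (by
        have := h.symm
        rwa [mul_eq_left] at this)
      have hadj : (cayleyGraph S).Adj a (a * s) :=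
        SimpleGraph.fromRel_adj .. |>.mpr ⟨hne, Or.inl ⟨s, hmem s (List.mem_cons_self (a := s) (l := t)), hs1, rfl⟩⟩
      obtain ⟨p, hp⟩ := ih (fun x hx => hmem x (List.mem_cons_of_mem _ hx)) (a * s) b hb
      exact ⟨SimpleGraph.Walk.cons hadj p, by simpa using Nat.add_le_add_right hp 1⟩

theorem word_of_walk (hinv : ∀ s ∈ S, s⁻¹ ∈ S) {a b : G} (p : (cayleyGraph S).Walk a b) :
    ∃ w : List G, (∀ s ∈ w, s ∈ (S : Set G)) ∧ w.prod = a⁻¹ * b ∧ w.length ≤ p.length := by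
  induction p with
  | nil => exact ⟨[], by simp, by simp, by simp⟩
  | @cons a c b hadj p ih =>
    obtain ⟨-, s, hs, rfl⟩ := (cayley_adj hinv).mp hadj
    obtain ⟨w, hm, hp, hl⟩ := ih
    refine ⟨s :: w, ?_, ?_, by simpa using Nat.add_le_add_right hl 1⟩
    · intro x hx
      rcases List.mem_cons.mp hx with rfl | hx
      exacts [hs, hm x hx]
    · rw [List.prod_cons, hp]
      group

theorem wordLength_le_of_walk (hinv : ∀ s ∈ S, s⁻¹ ∈ S) {a b : G}
    (p : (cayleyGraph S).Walk a b) : wordLength (S : Set G) (a⁻¹ * b) ≤ p.length := by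
  obtain ⟨w, hm, hp, hl⟩ := word_of_walk hinv p
  exact (wordLength_le hm hp).trans hl

theorem cayley_preconnected (hinv : ∀ s ∈ S, s⁻¹ ∈ S)
    (hgen : Subgroup.closure (S : Set G) = ⊤) : (cayleyGraph S).Preconnected := by
  intro a b
  obtain ⟨w, hm, hp⟩ := exists_word hinv hgen (a⁻¹ * b)
  obtain ⟨p, -⟩ := walk_of_word w (fun s hs => hm s hs) a b (by rw [hp]; group)
  exact ⟨p⟩

noncomputable def cayley_locallyFinite (hinv : ∀ s ∈ S, s⁻¹ ∈ S) :
    (cayleyGraph S).LocallyFinite := by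
  intro v
  apply Set.Finite.fintype
  have : (cayleyGraph S).neighborSet v ⊆ (fun s => v * s) '' (S : Set G) := by
    intro u hu
    obtain ⟨-, s, hs, rfl⟩ := (cayley_adj hinv).mp hu
    exact ⟨s, hs, rfl⟩
  exact (S.finite_toSet.image _).subset this

end Cayley

section MetricDict

open SimpleGraph Metric

variable {G : Type u} [Group G] [MetricSpace G] {S : Finset G}
  (hinv : ∀ s ∈ S, s⁻¹ ∈ S) (hgen : Subgroup.closure (S : Set G) = ⊤)
  (hdist : ∀ g h : G, dist g h = (wordLength (S : Set G) (g * h⁻¹) : ℝ))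
include hinv hgen hdist

theorem dist_le_of_walk {a b : G} (p : (cayleyGraph S).Walk a b) :
    dist a⁻¹ b⁻¹ ≤ (p.length : ℝ) := by
  rw [hdist, inv_inv]
  exact_mod_cast wordLength_le_of_walk hinv p

theorem walk_of_dist {g h : G} {n : ℕ} (hle : dist g h ≤ (n : ℝ)) :
    ∃ p : (cayleyGraph S).Walk g⁻¹ h⁻¹, p.length ≤ n := by
  rw [hdist] at hle
  have hW : wordLength (S : Set G) (g * h⁻¹) ≤ n := by exact_mod_cast hle
  obtain ⟨w, hl, hm, hp⟩ := wordLength_spec hinv hgen (g * h⁻¹)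
  obtain ⟨p, hpl⟩ := walk_of_word w (fun s hs => hm s hs) g⁻¹ h⁻¹ (by rw [hp]; group)
  exact ⟨p, hpl.trans (hl ▸ hW)⟩

theorem isBounded_iff_finite {A : Set G} : Bornology.IsBounded A ↔ A.Finite := by
  constructor
  · intro hb
    obtain ⟨r, hr⟩ := hb.subset_closedBall (1 : G)
    refine (wordLength_ball_finite hinv hgen ⌈r⌉₊).subset fun g hg => ?_
    have := hr hg
    rw [mem_closedBall, hdist] at this
    simp only [inv_one, mul_one] at this
    have : (wordLength (S : Set G) g : ℝ) ≤ (⌈r⌉₊ : ℝ) := this.trans (Nat.le_ceil r)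
    exact_mod_cast this
  · exact Set.Finite.isBounded

end MetricDict

set_option linter.unusedSectionVars false

section Coprod

variable {Y Z : Type*} [MetricSpace Y] [MetricSpace Z] (y₀ : Y) (z₀ : Z)

/-- "Norm" of a point of the coarse coproduct: distance to the basepoint on its side. -/
noncomputable def sumNorm : Y ⊕ Z → ℝ := fun p =>
  match p with
  | Sum.inl a => dist a y₀
  | Sum.inr b => dist z₀ b

theorem sumNorm_nonneg (p : Y ⊕ Z) : 0 ≤ sumNorm y₀ z₀ p := by
  cases p <;> exact dist_nonneg

theorem cdist_ll (a b : Y) :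
    letI := coprodMetric y₀ z₀
    dist (Sum.inl a : Y ⊕ Z) (Sum.inl b) = dist a b := rfl

theorem cdist_lr (a : Y) (b : Z) :
    letI := coprodMetric y₀ z₀
    dist (Sum.inl a : Y ⊕ Z) (Sum.inr b) = dist a y₀ + 1 + dist z₀ b := rfl

theorem cdist_rl (a : Z) (b : Y) :
    letI := coprodMetric y₀ z₀
    dist (Sum.inr a : Y ⊕ Z) (Sum.inl b) = dist b y₀ + 1 + dist z₀ a := rfl

theorem cdist_rr (a b : Z) :
    letI := coprodMetric y₀ z₀
    dist (Sum.inr a : Y ⊕ Z) (Sum.inr b) = dist a b := rfl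

theorem sumNorm_le (p q : Y ⊕ Z) :
    letI := coprodMetric y₀ z₀
    sumNorm y₀ z₀ p ≤ dist p q + sumNorm y₀ z₀ q + 1 := by
  match p, q with
  | Sum.inl a, Sum.inl b =>
    have := dist_triangle a b y₀
    simp only [cdist_ll, sumNorm]; linarith
  | Sum.inl a, Sum.inr b =>
    have := dist_nonneg (x := z₀) (y := b)
    simp only [cdist_lr, sumNorm]; linarith
  | Sum.inr a, Sum.inl b =>
    have := dist_nonneg (x := b) (y := y₀)
    simp only [cdist_rl, sumNorm]; linarith
  | Sum.inr a, Sum.inr b =>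
    have := dist_triangle z₀ b a
    have h2 : dist b a = dist a b := dist_comm _ _
    simp only [cdist_rr, sumNorm]; linarith

theorem cdist_le_sumNorm (p q : Y ⊕ Z) :
    letI := coprodMetric y₀ z₀
    dist p q ≤ sumNorm y₀ z₀ p + sumNorm y₀ z₀ q + 1 := by
  match p, q with
  | Sum.inl a, Sum.inl b =>
    have := dist_triangle a y₀ b
    have h2 : dist y₀ b = dist b y₀ := dist_comm _ _
    simp only [cdist_ll, sumNorm]; linarith
  | Sum.inl a, Sum.inr b => simp only [cdist_lr, sumNorm]; linarith
  | Sum.inr a, Sum.inl b =>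
    simp only [cdist_rl, sumNorm]; linarith
  | Sum.inr a, Sum.inr b =>
    have := dist_triangle a z₀ b
    have h2 : dist a z₀ = dist z₀ a := dist_comm _ _
    simp only [cdist_rr, sumNorm]; linarith

/-- Bounded subsets of the coproduct are exactly those with bounded `sumNorm`. -/
theorem isBounded_coprod_of_sumNorm (B : Set (Y ⊕ Z)) (C : ℝ)
    (hB : ∀ p ∈ B, sumNorm y₀ z₀ p ≤ C) :
    letI := coprodMetric y₀ z₀
    Bornology.IsBounded B := by
  letI := coprodMetric y₀ z₀
  rw [Metric.isBounded_iff]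
  exact ⟨C + C + 1, fun p hp q hq =>
    (cdist_le_sumNorm y₀ z₀ p q).trans (by
      have := hB p hp; have := hB q hq; linarith)⟩

theorem sumNorm_bounded_of_isBounded (B : Set (Y ⊕ Z)) :
    letI := coprodMetric y₀ z₀
    Bornology.IsBounded B → ∃ C : ℝ, ∀ p ∈ B, sumNorm y₀ z₀ p ≤ C := by
  letI := coprodMetric y₀ z₀
  intro hB
  rcases B.eq_empty_or_nonempty with rfl | ⟨p₀, hp₀⟩
  · exact ⟨0, by simp⟩
  · rw [Metric.isBounded_iff] at hB
    obtain ⟨C, hC⟩ := hB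
    exact ⟨C + sumNorm y₀ z₀ p₀ + 1, fun p hp =>
      (sumNorm_le y₀ z₀ p p₀).trans (by have := hC hp hp₀; linarith)⟩

theorem isBounded_inr_image (B : Set Z) (hB : Bornology.IsBounded B) :
    letI := coprodMetric y₀ z₀
    Bornology.IsBounded (Sum.inr '' B : Set (Y ⊕ Z)) := by
  letI := coprodMetric y₀ z₀
  rw [Metric.isBounded_iff] at hB ⊢
  obtain ⟨C, hC⟩ := hB
  refine ⟨C, ?_⟩
  rintro p ⟨b, hb, rfl⟩ q ⟨b', hb', rfl⟩
  rw [cdist_rr]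
  exact hC hb hb'

theorem isBounded_inl_image (B : Set Y) (hB : Bornology.IsBounded B) :
    letI := coprodMetric y₀ z₀
    Bornology.IsBounded (Sum.inl '' B : Set (Y ⊕ Z)) := by
  letI := coprodMetric y₀ z₀
  rw [Metric.isBounded_iff] at hB ⊢
  obtain ⟨C, hC⟩ := hB
  refine ⟨C, ?_⟩
  rintro p ⟨b, hb, rfl⟩ q ⟨b', hb', rfl⟩
  rw [cdist_ll]
  exact hC hb hb'

end Coprod

section Factor

theorem image_bounded_of_bornologous {X W : Type*} [PseudoMetricSpace X] [PseudoMetricSpace W]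
    {f : X → W} (hf : Bornologous f) {A : Set X} (hA : Bornology.IsBounded A) :
    Bornology.IsBounded (f '' A) := by
  rcases A.eq_empty_or_nonempty with rfl | ⟨a₀, ha₀⟩
  · simp
  · rw [Metric.isBounded_iff] at hA
    obtain ⟨C, hC⟩ := hA
    obtain ⟨S, -, hS⟩ := hf (max C 1) (lt_of_lt_of_le one_pos (le_max_right _ _))
    rw [Metric.isBounded_iff]
    refine ⟨S + S, ?_⟩
    rintro p ⟨a, ha, rfl⟩ q ⟨b, hb, rfl⟩
    have h1 : dist (f a) (f a₀) ≤ S := hS a a₀ ((hC ha ha₀).trans (le_max_left _ _))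
    have h2 : dist (f b) (f a₀) ≤ S := hS b a₀ ((hC hb ha₀).trans (le_max_left _ _))
    calc dist (f a) (f b) ≤ dist (f a) (f a₀) + dist (f a₀) (f b) := dist_triangle _ _ _
    _ ≤ S + S := by rw [dist_comm (f a₀)]; linarith

theorem factor_inr {X Y Z : Type*} [MetricSpace X] [MetricSpace Y] [MetricSpace Z]
    (y₀ : Y) (z₀ : Z) (f : X → Y ⊕ Z) :
    letI := coprodMetric y₀ z₀
    IsCoarse f → Bornology.IsBounded (f ⁻¹' {p | p.isLeft}) →
      ∃ h : X → Z, IsCoarse h ∧ Close (Sum.inr ∘ h) f := by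
  letI := coprodMetric y₀ z₀
  rintro ⟨hb, hp⟩ hbd
  set AL : Set X := f ⁻¹' {p | p.isLeft} with hAL
  set h : X → Z := fun x => Sum.elim (fun _ => z₀) id (f x) with hh
  -- uniform bound on sumNorm over f '' AL
  obtain ⟨C, hC⟩ := sumNorm_bounded_of_isBounded y₀ z₀ (f '' AL)
    (image_bounded_of_bornologous hb hbd)
  -- closeness
  have hclose : ∀ x : X, dist ((Sum.inr ∘ h) x) (f x) ≤ max (C + 1) 1 := by
    intro x
    cases hfx : f x with
    | inl y =>
      have hx : x ∈ AL := by simp [hAL, hfx]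
      have hN : dist y y₀ ≤ C := by
        have := hC (f x) ⟨x, hx, rfl⟩
        rwa [hfx] at this
      have : (Sum.inr ∘ h) x = (Sum.inr z₀ : Y ⊕ Z) := by simp [hh, hfx]
      rw [this, cdist_rl, dist_self]
      calc dist y y₀ + 1 + 0 ≤ C + 1 := by linarith
      _ ≤ max (C + 1) 1 := le_max_left _ _
    | inr z =>
      have : (Sum.inr ∘ h) x = (Sum.inr z : Y ⊕ Z) := by simp [hh, hfx]
      rw [this, dist_self]
      exact le_trans zero_le_one (le_max_right _ _)
  have hR0 : (0:ℝ) < max (C + 1) 1 := lt_of_lt_of_le one_pos (le_max_right _ _)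
  refine ⟨h, ⟨?_, ?_⟩, ⟨max (C + 1) 1, hR0, hclose⟩⟩
  · -- bornologous
    intro R hR
    obtain ⟨S, hSpos, hS⟩ := hb R hR
    refine ⟨max (C + 1) 1 + S + max (C + 1) 1, by linarith, fun x x' hxx' => ?_⟩
    have h1 := hclose x
    have h2 := hclose x'
    have h3 : dist (h x) (h x') = dist (Sum.inr (h x) : Y ⊕ Z) (Sum.inr (h x')) :=
      (cdist_rr y₀ z₀ _ _).symm
    rw [h3]
    calc dist (Sum.inr (h x) : Y ⊕ Z) (Sum.inr (h x'))
        ≤ dist (Sum.inr (h x) : Y ⊕ Z) (f x) + dist (f x) (f x')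
          + dist (f x') (Sum.inr (h x')) := dist_triangle4 _ _ _ _
      _ ≤ max (C + 1) 1 + S + max (C + 1) 1 := by
          have := hS x x' hxx'
          rw [dist_comm (f x')]
          exact add_le_add (add_le_add h1 this) h2
  · -- proper
    intro B hB
    have hsub : h ⁻¹' B ⊆ f ⁻¹' (Sum.inr '' B) ∪ AL := by
      intro x hx
      cases hfx : f x with
      | inl y => right; simp [hAL, hfx]
      | inr z =>
        left
        have : h x = z := by simp [hh, hfx]
        simp only [Set.mem_preimage, hfx]
        exact ⟨z, by rw [← this]; exact hx, rfl⟩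
    exact ((hp _ (isBounded_inr_image y₀ z₀ B hB)).union hbd).subset hsub

theorem factor_inl {X Y Z : Type*} [MetricSpace X] [MetricSpace Y] [MetricSpace Z]
    (y₀ : Y) (z₀ : Z) (f : X → Y ⊕ Z) :
    letI := coprodMetric y₀ z₀
    IsCoarse f → Bornology.IsBounded (f ⁻¹' {p | p.isRight}) →
      ∃ g : X → Y, IsCoarse g ∧ Close (Sum.inl ∘ g) f := by
  letI := coprodMetric y₀ z₀
  rintro ⟨hb, hp⟩ hbd
  set AR : Set X := f ⁻¹' {p | p.isRight} with hAR
  set g : X → Y := fun x => Sum.elim id (fun _ => y₀) (f x) with hg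
  obtain ⟨C, hC⟩ := sumNorm_bounded_of_isBounded y₀ z₀ (f '' AR)
    (image_bounded_of_bornologous hb hbd)
  have hclose : ∀ x : X, dist ((Sum.inl ∘ g) x) (f x) ≤ max (C + 1) 1 := by
    intro x
    cases hfx : f x with
    | inr z =>
      have hx : x ∈ AR := by simp [hAR, hfx]
      have hN : dist z₀ z ≤ C := by
        have := hC (f x) ⟨x, hx, rfl⟩
        rwa [hfx] at this
      have : (Sum.inl ∘ g) x = (Sum.inl y₀ : Y ⊕ Z) := by simp [hg, hfx]
      rw [this, cdist_lr, dist_self]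
      calc 0 + 1 + dist z₀ z ≤ C + 1 := by linarith
      _ ≤ max (C + 1) 1 := le_max_left _ _
    | inl y =>
      have : (Sum.inl ∘ g) x = (Sum.inl y : Y ⊕ Z) := by simp [hg, hfx]
      rw [this, dist_self]
      exact le_trans zero_le_one (le_max_right _ _)
  have hR0 : (0:ℝ) < max (C + 1) 1 := lt_of_lt_of_le one_pos (le_max_right _ _)
  refine ⟨g, ⟨?_, ?_⟩, ⟨max (C + 1) 1, hR0, hclose⟩⟩
  · intro R hR
    obtain ⟨S, hSpos, hS⟩ := hb R hR
    refine ⟨max (C + 1) 1 + S + max (C + 1) 1, by linarith, fun x x' hxx' => ?_⟩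
    have h1 := hclose x
    have h2 := hclose x'
    have h3 : dist (g x) (g x') = dist (Sum.inl (g x) : Y ⊕ Z) (Sum.inl (g x')) :=
      (cdist_ll y₀ z₀ _ _).symm
    rw [h3]
    calc dist (Sum.inl (g x) : Y ⊕ Z) (Sum.inl (g x'))
        ≤ dist (Sum.inl (g x) : Y ⊕ Z) (f x) + dist (f x) (f x')
          + dist (f x') (Sum.inl (g x')) := dist_triangle4 _ _ _ _
      _ ≤ max (C + 1) 1 + S + max (C + 1) 1 := by
          have := hS x x' hxx'
          rw [dist_comm (f x')]
          exact add_le_add (add_le_add h1 this) h2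
  · intro B hB
    have hsub : g ⁻¹' B ⊆ f ⁻¹' (Sum.inl '' B) ∪ AR := by
      intro x hx
      cases hfx : f x with
      | inr z => right; simp [hAR, hfx]
      | inl y =>
        left
        have : g x = y := by simp [hg, hfx]
        simp only [Set.mem_preimage, hfx]
        exact ⟨y, by rw [← this]; exact hx, rfl⟩
    exact ((hp _ (isBounded_inl_image y₀ z₀ B hB)).union hbd).subset hsub

end Factor

section EndsAux

open SimpleGraph CategoryTheory

universe v

variable {V : Type v} {Γ : SimpleGraph V}

/-- Universe-polymorphic version of `SimpleGraph.end_componentCompl_infinite`. -/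
theorem end_supp_infinite' (e : Γ.end) (K : (Finset V)ᵒᵖ) :
    ((e : (j : (Finset V)ᵒᵖ) → Γ.componentComplFunctor.obj j) K).supp.Infinite := by
  refine (e.val K).infinite_iff_in_all_ranges.mpr (fun L h => ?_)
  change Opposite.unop K ⊆ Opposite.unop (Opposite.op L) at h
  exact ⟨e.val (Opposite.op L), (e.prop (CategoryTheory.opHomOfLE h))⟩

/-- The subfunctor of components whose support meets `A` in an infinite set. -/
def inftyFunctor (Γ : SimpleGraph V) (A : Set V) : (Finset V)ᵒᵖ ⥤ Type v where
  obj K := {C : Γ.ComponentCompl K.unop // (C.supp ∩ A).Infinite}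
  map f := TypeCat.ofHom fun C => ⟨C.1.hom (le_of_op_hom f),
    C.2.mono (Set.inter_subset_inter_left A (ComponentCompl.subset_hom C.1 _))⟩
  map_id _ := by
    ext C : 3
    refine Subtype.ext ?_
    exact C.1.hom_refl
  map_comp {_ Y Z} h h' := by
    ext C : 3
    refine Subtype.ext ?_
    exact C.1.hom_trans (le_of_op_hom h) (le_of_op_hom h')

theorem exists_end_in (hlf : Γ.LocallyFinite) (hpc : Γ.Preconnected)
    {A : Set V} (hA : A.Infinite) :
    ∃ e : Γ.end, ∀ K : (Finset V)ᵒᵖ, ((e.val K).supp ∩ A).Infinite := by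
  classical
  haveI := hlf
  haveI : Fact Γ.Preconnected := ⟨hpc⟩
  haveI : ∀ K : (Finset V)ᵒᵖ, Finite ((inftyFunctor Γ A).obj K) := fun K => Subtype.finite
  haveI : ∀ K : (Finset V)ᵒᵖ, Nonempty ((inftyFunctor Γ A).obj K) := by
    intro K
    by_contra hne
    simp only [not_nonempty_iff] at hne
    have hall : ∀ C : Γ.ComponentCompl K.unop, (C.supp ∩ A).Finite := by
      intro C
      rw [← Set.not_infinite]
      exact fun h => hne.false ⟨C, h⟩
    have hsub : A ⊆ ↑K.unop ∪ ⋃ C : Γ.ComponentCompl K.unop, (C.supp ∩ A) := by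
      intro v hv
      by_cases hvK : v ∈ K.unop
      · exact Or.inl hvK
      · exact Or.inr (Set.mem_iUnion.mpr ⟨Γ.componentComplMk hvK,
          Γ.componentComplMk_mem hvK, hv⟩)
    exact hA ((K.unop.finite_toSet.union (Set.finite_iUnion hall)).subset hsub)
  obtain ⟨σ, hσ⟩ := nonempty_sections_of_finite_inverse_system (inftyFunctor Γ A)
  exact ⟨⟨fun K => (σ K).1, fun f => congrArg Subtype.val (hσ f)⟩, fun K => (σ K).2⟩

/-- A walk in the complement of `K` starting in `A` stays in `A`, provided every edge
leaving `A` has both endpoints in `F ⊆ K`. -/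
theorem walk_in_compl_stays {K : Finset V} {A F : Set V}
    (hsep : ∀ u v : V, Γ.Adj u v → u ∈ A → v ∉ A → u ∈ F ∧ v ∈ F) (hFK : F ⊆ ↑K) :
    ∀ {x y : ↥(↑K : Set V)ᶜ} (_ : (Γ.induce (↑K : Set V)ᶜ).Walk x y), ↑x ∈ A → ↑y ∈ A := by
  intro x y p
  induction p with
  | nil => exact id
  | @cons x c y hadj p ih =>
    intro hx
    have hadj' : Γ.Adj ↑x ↑c := hadj
    by_cases hc : (c : V) ∈ A
    · exact ih hc
    · exact absurd (hFK (hsep ↑x ↑c hadj' hx hc).1) x.2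

theorem supp_subset_of_sep {K : Finset V} {A F : Set V}
    (hsep : ∀ u v : V, Γ.Adj u v → u ∈ A → v ∉ A → u ∈ F ∧ v ∈ F) (hFK : F ⊆ ↑K)
    (C : Γ.ComponentCompl K) {v w : V} (hv : v ∈ C) (hw : w ∈ C) (hvA : v ∈ A) : w ∈ A := by
  obtain ⟨hv', hveq⟩ := hv
  obtain ⟨hw', hweq⟩ := hw
  have : (Γ.induce (↑K : Set V)ᶜ).connectedComponentMk ⟨v, hv'⟩ =
      (Γ.induce (↑K : Set V)ᶜ).connectedComponentMk ⟨w, hw'⟩ := hveq.trans hweq.symm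
  obtain ⟨p⟩ := SimpleGraph.ConnectedComponent.exact this
  exact walk_in_compl_stays hsep hFK p hvA

/-- A walk from inside a component of `Kᶜ` to outside of it must meet `K`. -/
theorem walk_meets_boundary {K : Finset V} (C : Γ.ComponentCompl K) :
    ∀ {a b : V} (p : Γ.Walk a b), a ∈ C → b ∉ C →
      ∃ k ∈ (↑K : Set V), ∃ q : Γ.Walk a k, q.length ≤ p.length := by
  intro a b p
  induction p with
  | nil => exact fun ha hb => absurd ha hb
  | @cons a c b hadj p ih =>
    intro ha hb
    by_cases hc : c ∈ K
    · exact ⟨c, hc, SimpleGraph.Walk.cons hadj SimpleGraph.Walk.nil, by simp⟩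
    · have hcC : c ∈ C := SimpleGraph.ComponentCompl.mem_of_adj a c ha hc hadj
      obtain ⟨k, hk, q, hq⟩ := ih hcC hb
      exact ⟨k, hk, SimpleGraph.Walk.cons hadj q, by simpa using Nat.add_le_add_right hq 1⟩

end EndsAux

/-- a finitely generated group, equipped with the word-length metric coming from
a finite symmetric generating set `S`, satisfies condition (C) (equivalently, has connected
Higson corona) iff it has at most one end, i.e. its Cayley graph with respect to `S` has at
most one end. -/
theorem group_condC_iff_at_most_one_end {G : Type u} [Group G] [MetricSpace G]
    (S : Finset G) (hinv : ∀ s ∈ S, s⁻¹ ∈ S)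
    (hgen : Subgroup.closure (S : Set G) = ⊤)
    (hdist : ∀ g h : G, dist g h = (wordLength (S : Set G) (g * h⁻¹) : ℝ)) :
    CondC G ↔
      (SimpleGraph.fromRel fun g h : G => ∃ s ∈ S, s ≠ 1 ∧ h = g * s).end.Subsingleton := by
  classical
  have hlf : (cayleyGraph S).LocallyFinite := cayley_locallyFinite hinv
  have hpc : (cayleyGraph S).Preconnected := cayley_preconnected hinv hgen
  constructor
  · -- CondC → at most one end
    intro hc a ha b hb
    by_contra hne
    have hK : ∃ K : (Finset G)ᵒᵖ, a K ≠ b K := by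
      by_contra h
      push_neg at h
      exact hne (funext h)
    obtain ⟨K, hK⟩ := hK
    set CA : (cayleyGraph S).ComponentCompl K.unop := a K with hCA
    set CB : (cayleyGraph S).ComponentCompl K.unop := b K with hCB
    have hKne : CA ≠ CB := hK
    have hdisj : Disjoint (CA : Set G) (CB : Set G) :=
      SimpleGraph.ComponentCompl.pairwise_disjoint hKne
    set f : G → G ⊕ G := fun g => if g⁻¹ ∈ CA then Sum.inl g else Sum.inr g with hfdef
    have hfl : ∀ x : G, x⁻¹ ∈ CA → f x = Sum.inl x := fun x hx => if_pos hx
    have hfr : ∀ x : G, x⁻¹ ∉ CA → f x = Sum.inr x := fun x hx => if_neg hx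
    -- separation estimate
    have hsep : ∀ R : ℝ, 0 < R → ∃ M : ℝ, ∀ g h : G, dist g h ≤ R →
        g⁻¹ ∈ CA → h⁻¹ ∉ CA → dist g 1 ≤ M ∧ dist h 1 ≤ M := by
      intro R hR
      obtain ⟨M₀, hM₀⟩ := ((K.unop : Set G).toFinite.image (fun k => dist k⁻¹ (1:G))).bddAbove
      have hM₀' : ∀ k ∈ (K.unop : Set G), dist k⁻¹ (1:G) ≤ M₀ := fun k hk => hM₀ ⟨k, hk, rfl⟩
      refine ⟨R + ((⌈R⌉₊ : ℝ) + M₀), ?_⟩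
      intro g h hgh hg hh
      obtain ⟨p, hp⟩ := walk_of_dist hinv hgen hdist
        (g := g) (h := h) (n := ⌈R⌉₊) (hgh.trans (Nat.le_ceil R))
      obtain ⟨k, hk, q, hq⟩ := walk_meets_boundary CA p hg hh
      have hq' : dist g k⁻¹ ≤ (⌈R⌉₊ : ℝ) := by
        have := dist_le_of_walk hinv hgen hdist q
        rw [inv_inv] at this
        exact this.trans (by exact_mod_cast hq.trans hp)
      have hg1 : dist g 1 ≤ (⌈R⌉₊ : ℝ) + M₀ := by
        calc dist g 1 ≤ dist g k⁻¹ + dist k⁻¹ 1 := dist_triangle _ _ _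
        _ ≤ (⌈R⌉₊ : ℝ) + M₀ := add_le_add hq' (hM₀' k hk)
      constructor
      · linarith
      · calc dist h 1 ≤ dist h g + dist g 1 := dist_triangle _ _ _
        _ ≤ R + ((⌈R⌉₊ : ℝ) + M₀) := by rw [dist_comm h g]; exact add_le_add hgh hg1
    have hcoarse :
        letI := coprodMetric (1 : G) (1 : G)
        IsCoarse f := by
      letI := coprodMetric (1 : G) (1 : G)
      constructor
      · intro R hR
        obtain ⟨M, hM⟩ := hsep R hR
        refine ⟨max R (M + 1 + M) + 1, by positivity, ?_⟩
        intro x x' hxx'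
        by_cases hx : x⁻¹ ∈ CA <;> by_cases hx' : x'⁻¹ ∈ CA
        · rw [hfl x hx, hfl x' hx', cdist_ll]
          exact hxx'.trans (by nlinarith [le_max_left R (M + 1 + M)])
        · obtain ⟨h1, h2⟩ := hM x x' hxx' hx hx'
          rw [hfl x hx, hfr x' hx', cdist_lr, dist_comm (1:G) x']
          nlinarith [le_max_right R (M + 1 + M)]
        · obtain ⟨h1, h2⟩ := hM x' x (by rwa [dist_comm]) hx' hx
          rw [hfr x hx, hfl x' hx', cdist_rl, dist_comm (1:G) x]
          nlinarith [le_max_right R (M + 1 + M)]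
        · rw [hfr x hx, hfr x' hx', cdist_rr]
          exact hxx'.trans (by nlinarith [le_max_left R (M + 1 + M)])
      · intro B hB
        obtain ⟨C, hC⟩ := sumNorm_bounded_of_isBounded (1:G) (1:G) B hB
        have hsub : f ⁻¹' B ⊆ Metric.closedBall (1:G) C := by
          intro x hx
          have := hC (f x) hx
          rw [Metric.mem_closedBall]
          by_cases hxm : x⁻¹ ∈ CA
          · rwa [hfl x hxm] at this
          · rw [hfr x hxm] at this
            rwa [show sumNorm (1:G) (1:G) (Sum.inr x : G ⊕ G) = dist (1:G) x from rfl,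
              dist_comm] at this
        exact (Metric.isBounded_closedBall).subset hsub
    rcases hc G G 1 1 f hcoarse with ⟨g₀, -, R₀, hR₀, hcl⟩ | ⟨h₀, -, R₀, hR₀, hcl⟩
    · -- f close to inl ∘ g₀ : the b-side support must be bounded, contradiction
      have hbd : ∀ x : G, x⁻¹ ∉ CA → dist x 1 ≤ R₀ := by
        intro x hx
        have h1 := hcl x
        simp only [Function.comp_apply] at h1
        rw [hfr x hx, cdist_lr] at h1
        have h2 := dist_nonneg (x := g₀ x) (y := (1:G))
        rw [dist_comm x (1:G)]
        linarith
      have hfin : {x : G | dist x 1 ≤ R₀}.Finite :=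
        (isBounded_iff_finite hinv hgen hdist).mp
          ((Metric.isBounded_closedBall (x := (1:G)) (r := R₀)).subset fun x hx => hx)
      have hsupp : (CB : Set G) ⊆ Inv.inv ⁻¹' {x : G | dist x 1 ≤ R₀} := by
        intro v hv
        have hvnb : v ∉ CA := Set.disjoint_right.mp hdisj hv
        exact hbd v⁻¹ (by rwa [inv_inv])
      exact (end_supp_infinite' ⟨b, hb⟩ K)
        ((hfin.preimage (inv_injective.injOn)).subset hsupp)
    · -- f close to inr ∘ h₀ : the a-side support must be bounded, contradiction
      have hbd : ∀ x : G, x⁻¹ ∈ CA → dist x 1 ≤ R₀ := by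
        intro x hx
        have h1 := hcl x
        simp only [Function.comp_apply] at h1
        rw [hfl x hx, cdist_rl] at h1
        have h2 := dist_nonneg (x := (1:G)) (y := h₀ x)
        linarith
      have hfin : {x : G | dist x 1 ≤ R₀}.Finite :=
        (isBounded_iff_finite hinv hgen hdist).mp
          ((Metric.isBounded_closedBall (x := (1:G)) (r := R₀)).subset fun x hx => hx)
      have hsupp : (CA : Set G) ⊆ Inv.inv ⁻¹' {x : G | dist x 1 ≤ R₀} := by
        intro v hv
        exact hbd v⁻¹ (by rwa [inv_inv])
      exact (end_supp_infinite' ⟨a, ha⟩ K)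
        ((hfin.preimage (inv_injective.injOn)).subset hsupp)
  · -- at most one end → CondC
    intro hsub
    intro Y Z _ _ y₀ z₀ f hf
    letI := coprodMetric y₀ z₀
    by_cases hL : Bornology.IsBounded (f ⁻¹' {p | p.isLeft})
    · exact Or.inr (factor_inr y₀ z₀ f hf hL)
    by_cases hR : Bornology.IsBounded (f ⁻¹' {p | p.isRight})
    · exact Or.inl (factor_inl y₀ z₀ f hf hR)
    exfalso
    -- both preimages unbounded: construct two distinct ends
    set A : Set G := {v : G | (f v⁻¹).isLeft} with hA
    have hALinf : (f ⁻¹' {p | p.isLeft}).Infinite := by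
      by_contra h
      exact hL ((Set.not_infinite.mp h).isBounded)
    have hARinf : (f ⁻¹' {p | p.isRight}).Infinite := by
      by_contra h
      exact hR ((Set.not_infinite.mp h).isBounded)
    have hAinf : A.Infinite := by
      refine Set.Infinite.preimage hALinf ?_
      intro p _
      exact ⟨p⁻¹, inv_inv p⟩
    have hBinf : {v : G | (f v⁻¹).isRight}.Infinite := by
      refine Set.Infinite.preimage hARinf ?_
      intro p _
      exact ⟨p⁻¹, inv_inv p⟩
    -- separating finite set
    obtain ⟨S₁, hS₁pos, hS₁⟩ := hf.1 1 one_pos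
    have hDfin : (f ⁻¹' {p | sumNorm y₀ z₀ p ≤ S₁}).Finite :=
      (isBounded_iff_finite hinv hgen hdist).mp
        (hf.2 _ (isBounded_coprod_of_sumNorm y₀ z₀ _ S₁ (fun p hp => hp)))
    have hF : (Inv.inv '' (f ⁻¹' {p | sumNorm y₀ z₀ p ≤ S₁}) : Set G).Finite :=
      hDfin.image _
    have hsepF : ∀ u v : G, (cayleyGraph S).Adj u v → u ∈ A → v ∉ A →
        u ∈ Inv.inv '' (f ⁻¹' {p | sumNorm y₀ z₀ p ≤ S₁}) ∧
        v ∈ Inv.inv '' (f ⁻¹' {p | sumNorm y₀ z₀ p ≤ S₁}) := by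
      intro u v hadj hu hv
      have hdle : dist u⁻¹ v⁻¹ ≤ (1 : ℝ) := by
        have := dist_le_of_walk hinv hgen hdist
          (SimpleGraph.Walk.cons hadj SimpleGraph.Walk.nil)
        simpa using this
      have hff : dist (f u⁻¹) (f v⁻¹) ≤ S₁ := hS₁ _ _ hdle
      obtain ⟨y, hy⟩ := Sum.isLeft_iff.mp hu
      have hv' : (f v⁻¹).isRight := Sum.not_isLeft.mp hv
      obtain ⟨z, hz⟩ := Sum.isRight_iff.mp hv'
      rw [hy, hz, cdist_lr] at hff
      have hyn : dist y y₀ ≤ S₁ := by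
        have := dist_nonneg (x := z₀) (y := z); linarith
      have hzn : dist z₀ z ≤ S₁ := by
        have := dist_nonneg (x := y) (y := y₀); linarith
      constructor
      · exact ⟨u⁻¹, by rw [Set.mem_preimage, hy]; exact hyn, inv_inv u⟩
      · exact ⟨v⁻¹, by rw [Set.mem_preimage, hz]; exact hzn, inv_inv v⟩
    set K₀ : Finset G := hF.toFinset with hK₀
    have hFK : (Inv.inv '' (f ⁻¹' {p | sumNorm y₀ z₀ p ≤ S₁}) : Set G) ⊆ ↑K₀ := by
      rw [hK₀, Set.Finite.coe_toFinset]
    obtain ⟨eA, heA⟩ := exists_end_in hlf hpc hAinf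
    obtain ⟨eB, heB⟩ := exists_end_in hlf hpc hBinf
    have heq : eA.1 = eB.1 := hsub eA.2 eB.2
    obtain ⟨va, hvaC, hvaA⟩ := (heA (Opposite.op K₀)).nonempty
    obtain ⟨vb, hvbC, hvbB⟩ := (heB (Opposite.op K₀)).nonempty
    have hvbC' : vb ∈ (eA.1 (Opposite.op K₀)).supp := by
      rw [heq]; exact hvbC
    have hvbA : vb ∈ A :=
      supp_subset_of_sep hsepF hFK (eA.1 (Opposite.op K₀)) hvaC hvbC' hvaA
    have : ¬ (f vb⁻¹).isLeft := Sum.not_isLeft.mpr hvbB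
    exact this hvbA
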